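/- arXiv:math/0011187 — 2 statements merged into one kernel-verified Lean document; each statement's English description precedes it below -/
import Mathlib

section
/- Let X be an elementary substructure of (H(χ), ∈, ≤_χ), let λ < γ be ordinals in X with γ a regular cardinal, and let Y be a minimal (η, λ)-extension of X for some η < λ. Then X ∩ γ is cofinal in Y ∩ γ. -/
open ZFSet FirstOrder

namespace P746

/-! ## First-order language with membership and a wellordering predicate -/

/-- The language with two binary relation symbols: `∈` and a wellordering `<*`. -/
def L : FirstOrder.Language where
  Functions := fun _ => Empty
  Relations := fun n => match n with
    | 2 => Fin 2
    | _ => Empty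

/-- The `L`-structure on (the members of) a ZF-set `M`, interpreting the first relation
as membership and the second as a given relation `r`. -/
def mStruc (M : ZFSet) (r : ZFSet → ZFSet → Prop) : L.Structure M.toSet where
  funMap := fun f _ => f.elim
  RelMap := fun {n} => match n with
    | 0 => fun R _ => R.elim
    | 1 => fun R _ => R.elim
    | 2 => fun R v => @ite _ (R = (0 : Fin 2)) (instDecidableEqFin 2 R 0)
      ((v 0 : ZFSet) ∈ (v 1 : ZFSet)) (r (v 0) (v 1))
    | (_+3) => fun R _ => R.elim

/-- `X` is an elementary substructure of `(M, ∈, r)`: `X ⊆ M` and every first-order formula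
with parameters from `X` holds in `X` iff it holds in `M`. -/
def ElemSub (M : ZFSet) (r : ZFSet → ZFSet → Prop) (X : ZFSet) : Prop :=
  ∃ h : X ⊆ M,
    ∀ (n : ℕ) (φ : L.Formula (Fin n)) (v : Fin n → X.toSet),
      (letI := mStruc M r
       φ.Realize (fun i => (⟨(v i : ZFSet), h (v i).2⟩ : M.toSet))) ↔
      (letI := mStruc X r; φ.Realize v)

/-- `r` is a wellordering of the members of `S`. -/
def WOn (S : ZFSet) (r : ZFSet → ZFSet → Prop) : Prop :=
  IsWellOrder S.toSet (Subrel r S.toSet)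

/-! ## Basic set-theoretic notions inside `ZFSet` -/

/-- `x` is a (von Neumann) ordinal: a transitive set of transitive sets. -/
def IsOrd (x : ZFSet) : Prop :=
  x.IsTransitive ∧ ∀ y ∈ x.toSet, ZFSet.IsTransitive y

/-- `w` is the first uncountable ordinal `ω₁`. -/
def IsOmega1 (w : ZFSet) : Prop :=
  IsOrd w ∧ ¬ w.toSet.Countable ∧ ∀ y ∈ w.toSet, y.toSet.Countable

/-- The set `[x]^{<ω}` of finite subsets of `x`. -/
noncomputable def finPow (x : ZFSet) : ZFSet :=
  ZFSet.sep (fun a => a.toSet.Finite) x.powerset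

/-- The set `[x]^n` of subsets of `x` of size `n`. -/
noncomputable def finPowCard (x : ZFSet) (n : ℕ) : ZFSet :=
  ZFSet.sep (fun a => a.toSet.Finite ∧ a.toSet.ncard = n) x.powerset

/-- `D^X_η`: the set of finite `a ⊆ η` such that `f(a) ∈ X` for every
`f : [η]^{|a|} → ω₁` belonging to `X` (`w` stands for `ω₁`). -/
def Dset (w X η : ZFSet) : Set ZFSet :=
  {a | a ∈ finPow η ∧ ∀ f ∈ X.toSet, ZFSet.IsFunc (finPowCard η a.toSet.ncard) w f →
    ∀ v : ZFSet, ZFSet.pair a v ∈ f → v ∈ X}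

/-- The Skolem hull of `X ∪ z` in `M` (with functions on `[η]^{<ω}`):
`X` together with all values `f(a)` for `f : [η]^{<ω} → M` in `X` and finite `a ⊆ z`. -/
def SkHull (M η X z : ZFSet) : Set ZFSet :=
  X.toSet ∪ {y | ∃ f ∈ X.toSet, ZFSet.IsFunc (finPow η) M f ∧
    ∃ a : ZFSet, a ∈ finPow η ∧ a ⊆ z ∧ ZFSet.pair a y ∈ f}

/-- `x` is hereditarily of cardinality less than `κ`. -/
def HerLt (κ : Cardinal) (x : ZFSet) : Prop :=
  ZFSet.mem_wf.fix (C := fun _ => Prop)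
    (fun y ih => Cardinal.mk y.toSet < κ ∧ ∀ z, ∀ h : z ∈ y, ih z h) x

/-- `H` is the collection `H(κ)` of sets hereditarily of cardinality `< κ`. -/
def IsHCard (κ : Cardinal) (H : ZFSet) : Prop :=
  ∀ x : ZFSet, x ∈ H ↔ HerLt κ x

/-! ## Clubs, stationarity and canonical functions on `ω₁` -/

noncomputable def omega1 : Ordinal.{0} := (Cardinal.aleph 1).ord
noncomputable def omega2 : Ordinal.{0} := (Cardinal.aleph 2).ord

/-- `C` is a club (closed unbounded) subset of `ω₁`. -/
def IsClub (C : Set Ordinal.{0}) : Prop :=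
  C ⊆ Set.Iio omega1 ∧
  (∀ o, o < omega1 → Order.IsSuccLimit o → (∀ b, b < o → ∃ c ∈ C, b ≤ c ∧ c < o) → o ∈ C) ∧
  (∀ b, b < omega1 → ∃ c ∈ C, b < c ∧ c < omega1)

/-- `S` is a stationary subset of `ω₁`. -/
def IsStat (S : Set Ordinal.{0}) : Prop :=
  ∀ C, IsClub C → (S ∩ C).Nonempty

/-- `f ≤ g` on a club. -/
def BddOnClub (f g : Ordinal.{0} → Ordinal.{0}) : Prop :=
  ∃ C, IsClub C ∧ ∀ α ∈ C, f α ≤ g α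

/-- `f < g` on a club. -/
def LtOnClub (f g : Ordinal.{0} → Ordinal.{0}) : Prop :=
  ∃ C, IsClub C ∧ ∀ α ∈ C, f α < g α

/-- `f` is a canonical function for `γ`: it is above every canonical function for every `β < γ`
(mod clubs), and minimally so.  (This is the standard recursive characterization of the
statement that the empty condition in `P(ω₁)/NS_{ω₁}` forces `j(f)(ω₁^V) = γ`.) -/
def Canonical : Ordinal.{0} → (Ordinal.{0} → Ordinal.{0}) → Prop :=
  Ordinal.lt_wf.fix (C := fun _ => (Ordinal.{0} → Ordinal.{0}) → Prop)
    (fun γ ih f =>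
      (∀ β, ∀ hβ : β < γ, ∀ g, ih β hβ g → LtOnClub g f) ∧
      ∀ h : Ordinal.{0} → Ordinal.{0},
        (∀ β, ∀ hβ : β < γ, ∀ g, ih β hβ g → LtOnClub g h) → BddOnClub f h)

/-- Every `f : ω₁ → ω₁` is bounded on a club by a canonical function for some `γ < ω₂`. -/
def Bounding : Prop :=
  ∀ f : Ordinal.{0} → Ordinal.{0}, (∀ α, α < omega1 → f α < omega1) →
    ∃ γ, γ < omega2 ∧ ∃ g, Canonical γ g ∧ BddOnClub f g

/-- `o` is the order type of the set of ordinals `s`: there is a strictly increasing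
enumeration of `s` indexed by the ordinals below `o`. -/
def IsOtypOf (o : Ordinal.{0}) (s : Set Ordinal.{0}) : Prop :=
  ∃ e : Ordinal.{0} → Ordinal.{0},
    (∀ i j, i < j → j < o → e i < e j) ∧
    (∀ i, i < o → e i ∈ s) ∧ ∀ x ∈ s, ∃ i, i < o ∧ e i = x

/-! ## Trees on `ω × ω` and `ω × Ord` (as sets of pairs of lists) -/

def IsTreeN (S : Set (List ℕ × List ℕ)) : Prop :=
  ∀ p ∈ S, p.1.length = p.2.length ∧ ∀ n : ℕ, (p.1.take n, p.2.take n) ∈ S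

def IsTreeO (T : Set (List ℕ × List Ordinal.{0})) : Prop :=
  ∀ p ∈ T, p.1.length = p.2.length ∧ ∀ n : ℕ, (p.1.take n, p.2.take n) ∈ T

/-- Projection of a tree on `ω × ω`. -/
def projN (S : Set (List ℕ × List ℕ)) : Set (ℕ → ℕ) :=
  {x | ∃ y : ℕ → ℕ, ∀ n : ℕ,
    (List.ofFn (fun i : Fin n => x i), List.ofFn (fun i : Fin n => y i)) ∈ S}

/-- Projection of a tree on `ω × Ord`. -/
def projO (T : Set (List ℕ × List Ordinal.{0})) : Set (ℕ → ℕ) :=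
  {x | ∃ y : ℕ → Ordinal.{0}, ∀ n : ℕ,
    (List.ofFn (fun i : Fin n => x i), List.ofFn (fun i : Fin n => y i)) ∈ T}

/-- Projection of the restricted tree `T ↾ (ω × α)`. -/
def projOBelow (T : Set (List ℕ × List Ordinal.{0})) (α : Ordinal.{0}) : Set (ℕ → ℕ) :=
  {x | ∃ y : ℕ → Ordinal.{0}, (∀ i, y i < α) ∧ ∀ n : ℕ,
    (List.ofFn (fun i : Fin n => x i), List.ofFn (fun i : Fin n => y i)) ∈ T}

/-! ## Names, evaluation, and generic extensions -/

open Classical in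
/-- Evaluation of a `P`-name `τ` by a filter `G`:
`val G τ = { val G σ : ∃ p ∈ G, (σ, p) ∈ τ }`, by recursion on rank. -/
noncomputable def val (G : ZFSet) : ZFSet → ZFSet :=
  WellFounded.fix (InvImage.wf ZFSet.rank Ordinal.lt_wf)
    (fun τ ih =>
      ZFSet.sUnion <| ZFSet.sep
        (fun y => ∃ z ∈ τ.toSet,
          if h : ∃ σ, ZFSet.rank σ < ZFSet.rank τ ∧ ∃ p ∈ G.toSet, z = ZFSet.pair σ p
          then y = {ih h.choose h.choose_spec.1}
          else y = ∅)
        (ZFSet.powerset (ZFSet.sUnion (ZFSet.sUnion (ZFSet.sUnion τ)))))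

/-- The universe is a generic extension `V[G]` of the transitive class `V` by the
partial order `(P, ≤)` (with `le` the set of pairs `(p,q)` with `p ≤ q`), `G ⊆ P`
a filter meeting every dense subset of `P` lying in `V`, and every set being the
value of a `P`-name in `V`. -/
def IsGenericExt (V : Set ZFSet) (P le G : ZFSet) : Prop :=
  (∀ x ∈ V, ∀ y, y ∈ x → y ∈ V) ∧ P ∈ V ∧ le ∈ V ∧
  (∀ p, p ∈ P → ZFSet.pair p p ∈ le) ∧
  (∀ p q z, ZFSet.pair p q ∈ le → ZFSet.pair q z ∈ le → ZFSet.pair p z ∈ le) ∧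
  (∀ p q, ZFSet.pair p q ∈ le → p ∈ P ∧ q ∈ P) ∧
  G ⊆ P ∧ G ≠ ∅ ∧
  (∀ p q, p ∈ G → q ∈ G → ∃ r, r ∈ G ∧ ZFSet.pair r p ∈ le ∧ ZFSet.pair r q ∈ le) ∧
  (∀ p q, p ∈ G → q ∈ P → ZFSet.pair p q ∈ le → q ∈ G) ∧
  (∀ D, D ∈ V → D ⊆ P → (∀ p, p ∈ P → ∃ q, q ∈ D ∧ ZFSet.pair q p ∈ le) →
    ∃ q, q ∈ G ∧ q ∈ D) ∧
  (∀ x : ZFSet, ∃ τ, τ ∈ V ∧ x = val G τ)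

/-- In the generic extension, the forcing added no new `ω`-sequences of ordinals;
i.e. `P` is `(ω, ∞)`-distributive. -/
def Distributive (V : Set ZFSet) : Prop :=
  ∀ f o : ZFSet, (o.IsTransitive ∧ ∀ y ∈ o.toSet, ZFSet.IsTransitive y) →
    ZFSet.IsFunc ZFSet.omega o f → f ∈ V

/-! ## Ultrafilters and completeness -/

/-- `U` is an ultrafilter on the set `S`. -/
def IsUltraOn (S U : ZFSet) : Prop :=
  U ⊆ S.powerset ∧ S ∈ U ∧ (∅ : ZFSet) ∉ U ∧
  (∀ A B, A ∈ U → A ⊆ B → B ⊆ S → B ∈ U) ∧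
  (∀ A B, A ∈ U → B ∈ U → A ∩ B ∈ U) ∧
  (∀ A, A ⊆ S → (A ∈ U ∨ ZFSet.sep (fun x => x ∉ A) S ∈ U))

/-- `U` is `γ`-complete with respect to families of members of `U` lying in `W`. -/
def CompleteOn (W : Set ZFSet) (γ : Cardinal.{1}) (S U : ZFSet) : Prop :=
  ∀ F, F ∈ W → F ≠ ∅ → F ⊆ U → Cardinal.mk F.toSet < γ →
    ZFSet.sep (fun x => ∀ A ∈ F.toSet, x ∈ A) S ∈ U

/-! ## Internal finite sequences, trees and homogeneity -/

/-- The set `κ^{<ω}` of finite sequences from `κ` (functions `n → κ`, `n < ω`). -/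
noncomputable def seqs (κ : ZFSet) : ZFSet :=
  ZFSet.sep (fun f => ∃ n, n ∈ ZFSet.omega ∧ ZFSet.IsFunc n κ f)
    (((κ ∪ ZFSet.omega).powerset.powerset).powerset)

/-- The set of functions `a → b` as a ZF-set. -/
noncomputable def funsZ (a b : ZFSet) : ZFSet :=
  ZFSet.sep (fun f => ZFSet.IsFunc a b f) (((a ∪ b).powerset.powerset).powerset)

/-- Restriction of a (set-)function `f` to `m`. -/
noncomputable def restr (f m : ZFSet) : ZFSet :=
  ZFSet.sep (fun p => ∃ i v, i ∈ m ∧ p = ZFSet.pair i v) f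

/-- `T` is a tree on `ω × κ`: a set of pairs of finite sequences of equal length,
closed under restriction. -/
def IsTreeZ (κ T : ZFSet) : Prop :=
  ∀ z, z ∈ T → ∃ n s t, n ∈ ZFSet.omega ∧ ZFSet.IsFunc n ZFSet.omega s ∧
    ZFSet.IsFunc n κ t ∧ z = ZFSet.pair s t ∧
    ∀ m, m ∈ n → ZFSet.pair (restr s m) (restr t m) ∈ T

/-- `x ∈ p[T]`, computed in `W`: there is a branch witness `y ∈ W`. -/
def inProjZ (W : Set ZFSet) (κ T x : ZFSet) : Prop :=
  ∃ y, y ∈ W ∧ ZFSet.IsFunc ZFSet.omega κ y ∧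
    ∀ n, n ∈ ZFSet.omega → ZFSet.pair (restr x n) (restr y n) ∈ T

/-- `x ∈ p[T ↾ (ω × A)]` where the branch takes values satisfying `Q`. -/
def inProjVal (κ T x : ZFSet) (Q : ZFSet → Prop) : Prop :=
  ∃ y, ZFSet.IsFunc ZFSet.omega κ y ∧ (∀ i v, ZFSet.pair i v ∈ y → Q v) ∧
    ∀ n, n ∈ ZFSet.omega → ZFSet.pair (restr x n) (restr y n) ∈ T

/-- The tower `⟨π(x ↾ k) : k < ω⟩` is countably complete, relativized to `W`. -/
def CCTower (W : Set ZFSet) (κ π x : ZFSet) : Prop :=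
  ∀ Af, Af ∈ W → ZFSet.IsFunc ZFSet.omega ((seqs κ).powerset) Af →
    (∀ n U a, n ∈ ZFSet.omega → ZFSet.pair (restr x n) U ∈ π →
      ZFSet.pair n a ∈ Af → a ∈ U) →
    ∃ y, y ∈ W ∧ ZFSet.IsFunc ZFSet.omega κ y ∧
      ∀ n a, n ∈ ZFSet.omega → ZFSet.pair n a ∈ Af → restr y n ∈ a

/-- `(T, π)` is a `γ`-homogeneous tree system on `ω × κ`, relativized to the class `W`. -/
def HomSys (W : Set ZFSet) (γ : Cardinal.{1}) (κ T π : ZFSet) : Prop :=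
  IsTreeZ κ T ∧
  (∀ z, z ∈ π → ∃ n s U, n ∈ ZFSet.omega ∧ ZFSet.IsFunc n ZFSet.omega s ∧
    z = ZFSet.pair s U ∧ IsUltraOn (funsZ n κ) U ∧ CompleteOn W γ (funsZ n κ) U ∧
    ZFSet.sep (fun t => ZFSet.pair s t ∈ T) (funsZ n κ) ∈ U) ∧
  (∀ s U U', ZFSet.pair s U ∈ π → ZFSet.pair s U' ∈ π → U = U') ∧
  (∀ x, x ∈ W → ZFSet.IsFunc ZFSet.omega ZFSet.omega x →
    (inProjZ W κ T x ↔
      ((∀ n, n ∈ ZFSet.omega → ∃ U, ZFSet.pair (restr x n) U ∈ π) ∧ CCTower W κ π x)))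

/-- `A` is a `γ`-homogeneously Suslin set of reals, in the sense of the class `W`. -/
def HomSuslinIn (W : Set ZFSet) (γ : Cardinal.{1}) (A : ZFSet) : Prop :=
  A ⊆ funsZ ZFSet.omega ZFSet.omega ∧
  ∃ κ T π, κ ∈ W ∧ T ∈ W ∧ π ∈ W ∧
    (κ.IsTransitive ∧ ∀ y ∈ κ.toSet, ZFSet.IsTransitive y) ∧
    HomSys W γ κ T π ∧
    ∀ x, ZFSet.IsFunc ZFSet.omega ZFSet.omega x → (x ∈ A ↔ inProjZ W κ T x)


/-! ## Additional notions -/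

/-- `γ` is a regular (limit) cardinal, as a ZF-set ordinal: the range of any function
from a smaller ordinal into `γ` is bounded. -/
def IsRegOrd (γ : ZFSet) : Prop :=
  IsOrd γ ∧ (∀ o ∈ γ.toSet, ∃ o' ∈ γ.toSet, o ∈ o') ∧
  ∀ b f, b ∈ γ → ZFSet.IsFunc b γ f → ∃ o ∈ γ.toSet, ∀ x v, ZFSet.pair x v ∈ f → v ∈ o

/-- `Y` is a minimal `(η, λ)`-extension of `X` (inside the model `M` with wellordering `r`):
`Y ≺ M`, `Y ∩ η = X ∩ η`, and `Y` is the Skolem hull of `X ∪ A` for some `A ⊆ λ`. -/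
def IsMinExt (M : ZFSet) (r : ZFSet → ZFSet → Prop) (η lam X Y : ZFSet) : Prop :=
  ElemSub M r Y ∧ Y ∩ η = X ∩ η ∧ ∃ A : ZFSet, A ⊆ lam ∧ Y.toSet = SkHull M lam X A

/-- `U` is a normal measure on the (measurable) cardinal `λ`. -/
def IsNormalMeasure (lam U : ZFSet) : Prop :=
  IsOrd lam ∧ IsUltraOn lam U ∧
  CompleteOn Set.univ (Cardinal.mk lam.toSet) lam U ∧
  (∀ x, x ∈ lam → ({x} : ZFSet) ∉ U) ∧
  ∀ f A, A ∈ U → ZFSet.IsFunc lam lam f →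
    (∀ x v, x ∈ A → ZFSet.pair x v ∈ f → (v ∈ x ∨ x = ∅)) →
    ∃ B c, B ∈ U ∧ ∀ x, x ∈ B → ZFSet.pair x c ∈ f

/-- `g` is the `ξ`-th ordinal of `M` (counting from `0`): the ordinals of `M` below `g`
have order type `ξ`. -/
def NthOrdOf (M : ZFSet) (ξ : Ordinal.{0}) (g : ZFSet) : Prop :=
  IsOrd g ∧ g ∈ M ∧
  IsOtypOf ξ (ZFSet.rank '' {x : ZFSet | x ∈ M.toSet ∧ IsOrd x ∧ x ∈ g})

/-- The relation `≤_o` on a tree `T` on `ω × ω₁`: one sequence extends the other, and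
the first coordinate of the last element of the longer one codes that the length of the
first is below the length of the second in the coded ordering.  (`decode k m n` means:
the value `k` codes `m` before `n`.) -/
def leO (T : Set (List ℕ × List Ordinal.{0})) (decode : ℕ → ℕ → ℕ → Prop)
    (p q : List ℕ × List Ordinal.{0}) : Prop :=
  p ∈ T ∧ q ∈ T ∧
  ((p.1 <+: q.1 ∧ p.2 <+: q.2 ∧ p.1.length < q.1.length ∧
      decode (q.1.getD (q.1.length - 1) 0) p.1.length q.1.length) ∨
   (q.1 <+: p.1 ∧ q.2 <+: p.2 ∧ q.1.length < p.1.length ∧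
      decode (p.1.getD (p.1.length - 1) 0) p.1.length q.1.length))

/-- The binary relation on `ω` coded by `x : ω → ω`:  comparisons of `n` with smaller
numbers are decided by `x (n - 1)`. -/
def codedRel (decode : ℕ → ℕ → ℕ → Prop) (x : ℕ → ℕ) (m n : ℕ) : Prop :=
  (m < n ∧ decode (x (n - 1)) m n) ∨ (n < m ∧ decode (x (m - 1)) m n)


/-! ### Auxiliary lemmas for stmt_3 -/

theorem isOrd_of_mem {x y : ZFSet} (hx : IsOrd x) (hyx : y ∈ x) : IsOrd y :=
  ⟨hx.2 y hyx, fun z hz => hx.2 z (hx.1.mem_trans hz hyx)⟩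

theorem ord_tricho : ∀ x y : ZFSet, IsOrd x → IsOrd y → x ∈ y ∨ x = y ∨ y ∈ x := by
  intro x
  induction x using ZFSet.inductionOn with
  | _ x ihx =>
  intro y
  induction y using ZFSet.inductionOn with
  | _ y ihy =>
  intro hx hy
  by_contra hc
  push_neg at hc
  obtain ⟨h1, h2, h3⟩ := hc
  refine h2 (ZFSet.ext fun w => ⟨fun hw => ?_, fun hw => ?_⟩)
  · rcases ihx w hw y (isOrd_of_mem hx hw) hy with h | h | h
    · exact h
    · exact absurd (h ▸ hw) h3
    · exact absurd (hx.1.mem_trans h hw) h3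
  · rcases ihy w hw hx (isOrd_of_mem hy hw) with h | h | h
    · exact absurd (hy.1.mem_trans h hw) h1
    · exact absurd (h ▸ hw) h1
    · exact h

theorem ord_subset {x y : ZFSet} (hx : IsOrd x) (hy : IsOrd y) (hs : x ⊆ y) :
    x = y ∨ x ∈ y := by
  rcases ord_tricho x y hx hy with h | h | h
  · exact Or.inr h
  · exact Or.inl h
  · exact absurd (hs h) (ZFSet.mem_irrefl y)

theorem ord_max {γ o1 o2 : ZFSet} (hγ : IsOrd γ) (h1 : o1 ∈ γ) (h2 : o2 ∈ γ) :
    ∃ o, o ∈ γ ∧ o1 ⊆ o ∧ o2 ⊆ o := by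
  rcases ord_tricho o1 o2 (isOrd_of_mem hγ h1) (isOrd_of_mem hγ h2) with h | rfl | h
  · exact ⟨o2, h2, (isOrd_of_mem hγ h2).1.subset_of_mem h, ZFSet.subset_def.2 fun _ hz => hz⟩
  · exact ⟨o1, h1, ZFSet.subset_def.2 fun _ hz => hz, ZFSet.subset_def.2 fun _ hz => hz⟩
  · exact ⟨o1, h1, ZFSet.subset_def.2 fun _ hz => hz, (isOrd_of_mem hγ h1).1.subset_of_mem h⟩

theorem herLt_of_mem {κ : Cardinal.{1}} {x z : ZFSet} (hx : HerLt κ x) (hz : z ∈ x) :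
    HerLt κ z := by
  unfold HerLt at hx ⊢
  rw [WellFounded.fix_eq] at hx
  exact hx.2 z hz

theorem bound_main {γ lam f M : ZFSet} (hγ : IsRegOrd γ) (hlo : IsOrd lam) (hlamγ : lam ∈ γ)
    (hf : ZFSet.IsFunc (finPow lam) M f) :
    ∃ o, o ∈ γ ∧ ∀ p u w : ZFSet, p ∈ f → u ∈ p → w ∈ u → w ∈ γ → w ∈ o := by
  classical
  obtain ⟨hγo, hγlim, hγreg⟩ := hγ
  set T : Set ZFSet := {v | v ∈ γ ∧ ∃ a, ZFSet.pair a v ∈ f} with hT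
  have step1 : ∃ o1, o1 ∈ γ ∧ ∀ v ∈ T, v ∈ o1 := by
    by_cases hfin : T.Finite
    · refine Set.Finite.induction_on_subset T hfin
        ⟨lam, hlamγ, fun v hv => absurd hv (Set.notMem_empty v)⟩ ?_
      rintro b s hbT _ _ ⟨o1, ho1, hbo1⟩
      obtain ⟨o2, ho2, hbo2⟩ := hγlim b hbT.1
      obtain ⟨o3, ho3, h13, h23⟩ := ord_max hγo ho1 ho2
      refine ⟨o3, ho3, fun v hv => ?_⟩
      rcases Set.mem_insert_iff.1 hv with rfl | hv
      · exact h23 hbo2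
      · exact h13 (hbo1 v hv)
    · have hTne : T.Nonempty := Set.Infinite.nonempty hfin
      have hain : ∀ v : T, Classical.choose v.2.2 ∈ finPow lam := fun v =>
        (ZFSet.pair_mem_prod.1 (hf.1 (Classical.choose_spec v.2.2))).1
      let i : T → (finPow lam).toSet := fun v => ⟨Classical.choose v.2.2, hain v⟩
      have hi : Function.Injective i := by
        intro v1 v2 h
        have h1 := Classical.choose_spec v1.2.2
        have h2 := Classical.choose_spec v2.2.2
        have he : Classical.choose v1.2.2 = Classical.choose v2.2.2 := congrArg Subtype.val h
        rw [← he] at h2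
        exact Subtype.ext ((hf.2 _ (hain v1)).unique h1 h2)
      have hsubl : ∀ a : (finPow lam).toSet, (a : ZFSet).toSet ⊆ lam.toSet := by
        intro a z hz
        exact ZFSet.mem_powerset.1 (ZFSet.mem_sep.1 a.2).1 hz
      have hfina : ∀ a : (finPow lam).toSet,
          ((Subtype.val ⁻¹' (a : ZFSet).toSet : Set lam.toSet)).Finite := fun a =>
        Set.Finite.preimage (Subtype.val_injective.injOn)
          (ZFSet.mem_sep.1 a.2).2
      let j : (finPow lam).toSet → Finset lam.toSet := fun a => (hfina a).toFinset
      have hj : Function.Injective j := by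
        intro a b h
        have h' : (Subtype.val ⁻¹' (a : ZFSet).toSet : Set lam.toSet)
            = Subtype.val ⁻¹' (b : ZFSet).toSet := by
          rwa [Set.Finite.toFinset_inj] at h
        have ha' : (a : ZFSet).toSet = (b : ZFSet).toSet := by
          have h1 : Subtype.val '' (Subtype.val ⁻¹' (a : ZFSet).toSet : Set lam.toSet)
              = (a : ZFSet).toSet := by
            rw [Subtype.image_preimage_coe]
            exact Set.inter_eq_right.2 (hsubl a)
          have h2 : Subtype.val '' (Subtype.val ⁻¹' (b : ZFSet).toSet : Set lam.toSet)
              = (b : ZFSet).toSet := by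
            rw [Subtype.image_preimage_coe]
            exact Set.inter_eq_right.2 (hsubl b)
          rw [← h1, ← h2, h']
        exact Subtype.ext (ZFSet.ext fun z => Set.ext_iff.1 ha' z)
      haveI hlaminf : Infinite lam.toSet := by
        by_contra h
        haveI : Finite lam.toSet := not_infinite_iff_finite.1 h
        haveI : Fintype lam.toSet := Fintype.ofFinite _
        haveI : Finite ((finPow lam).toSet) := Finite.of_injective j hj
        haveI : Finite T := Finite.of_injective i hi
        exact hfin (Set.toFinite T)
      have hcard : Cardinal.mk T ≤ Cardinal.mk lam.toSet := by
        calc Cardinal.mk T ≤ Cardinal.mk (Finset lam.toSet) :=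
              Cardinal.mk_le_of_injective (hj.comp hi)
          _ = Cardinal.mk lam.toSet := Cardinal.mk_finset_of_infinite _
      obtain ⟨emb⟩ := (Cardinal.le_def _ _).1 hcard
      haveI : Nonempty T := hTne.to_subtype
      have hFsurj := Function.invFun_surjective emb.injective
      let F' : ZFSet → ZFSet := fun z =>
        if h : z ∈ lam then ((Function.invFun emb ⟨z, h⟩ : T) : ZFSet) else ∅
      have hF'T : ∀ z, z ∈ lam → F' z ∈ T := by
        intro z hz
        have h0 : F' z = ((Function.invFun emb ⟨z, hz⟩ : T) : ZFSet) := dif_pos hz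
        rw [h0]; exact (Function.invFun emb ⟨z, hz⟩).2
      set g : ZFSet := ZFSet.sep (fun p => ∃ z, z ∈ lam ∧ p = ZFSet.pair z (F' z))
        (ZFSet.prod lam γ) with hg
      have hgfun : ZFSet.IsFunc lam γ g := by
        constructor
        · exact ZFSet.subset_def.2 fun p hp => (ZFSet.mem_sep.1 hp).1
        · intro z hz
          refine ⟨F' z, ZFSet.mem_sep.2
            ⟨ZFSet.pair_mem_prod.2 ⟨hz, (hF'T z hz).1⟩, z, hz, rfl⟩, ?_⟩
          intro w hw
          obtain ⟨-, z', hz', he⟩ := ZFSet.mem_sep.1 hw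
          obtain ⟨e1, e2⟩ := ZFSet.pair_inj.1 he
          rw [e2, ← e1]
      obtain ⟨o1, ho1, hb⟩ := hγreg lam g hlamγ hgfun
      refine ⟨o1, ho1, fun v hv => ?_⟩
      obtain ⟨zl, hzl⟩ := hFsurj ⟨v, hv⟩
      have hFv : F' (zl : ZFSet) = v := by
        have h0 : F' (zl : ZFSet)
            = ((Function.invFun emb ⟨(zl : ZFSet), zl.2⟩ : T) : ZFSet) := dif_pos zl.2
        rw [h0, Subtype.coe_eta, hzl]
      have hpg : ZFSet.pair (zl : ZFSet) v ∈ g := by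
        rw [← hFv]
        exact ZFSet.mem_sep.2
          ⟨ZFSet.pair_mem_prod.2 ⟨zl.2, (hF'T _ zl.2).1⟩, _, zl.2, rfl⟩
      exact hb _ _ hpg
  obtain ⟨o1, ho1, hbT⟩ := step1
  obtain ⟨o2, ho2, hlamo2⟩ := hγlim lam hlamγ
  obtain ⟨o, ho, h1o, h2o⟩ := ord_max hγo ho1 ho2
  refine ⟨o, ho, fun p u w hp hu hw hwγ => ?_⟩
  obtain ⟨a, ha, b, -, rfl⟩ := ZFSet.mem_prod.1 (hf.1 hp)
  have hu' : u = ({a} : ZFSet) ∨ u = ({a, b} : ZFSet) := ZFSet.mem_pair.1 hu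
  have hw' : w = a ∨ w = b := by
    rcases hu' with rfl | rfl
    · exact Or.inl (ZFSet.mem_singleton.1 hw)
    · exact ZFSet.mem_pair.1 hw
  rcases hw' with rfl | rfl
  · have hwsub : w ⊆ lam := ZFSet.mem_powerset.1 (ZFSet.mem_sep.1 ha).1
    have hlamo : lam ∈ o := h2o hlamo2
    rcases ord_subset (isOrd_of_mem hγo hwγ) hlo hwsub with rfl | hwl
    · exact hlamo
    · exact (isOrd_of_mem hγo ho).1.mem_trans hwl hlamo
  · exact h1o (hbT w ⟨hwγ, a, hp⟩)


open FirstOrder Language in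
/-- The membership atomic formula. -/
def memF {α : Type} (t₁ t₂ : L.Term α) : L.Formula α :=
  Relations.formula₂ (0 : Fin 2) t₁ t₂

open FirstOrder Language in
/-- Matrix: (p ∈ f ∧ u ∈ p ∧ w ∈ u ∧ w ∈ gam) → w ∈ o, with free variables
`inl 0 = f`, `inl 1 = gam`, `inl 2 = o` and bound variables `inr 0 = p`,
`inr 1 = u`, `inr 2 = w`. -/
def phiMat : L.Formula ((Fin 3) ⊕ (Fin 3)) :=
  (memF (Term.var (.inr 0)) (Term.var (.inl 0)) ⊓ memF (Term.var (.inr 1)) (Term.var (.inr 0)) ⊓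
   memF (Term.var (.inr 2)) (Term.var (.inr 1)) ⊓ memF (Term.var (.inr 2)) (Term.var (.inl 1))).imp
  (memF (Term.var (.inr 2)) (Term.var (.inl 2)))

open FirstOrder Language in
/-- `o ∈ gam ∧ ∀ p u w, (p ∈ f ∧ u ∈ p ∧ w ∈ u ∧ w ∈ gam) → w ∈ o`, free variables
`0 = f`, `1 = gam`, `2 = o`. -/
noncomputable def phiB : L.Formula (Fin 3) :=
  memF (Term.var 2) (Term.var 1) ⊓ phiMat.iAlls (Fin 3)

open FirstOrder Language in
/-- `∃ o, phiB`, free variables `0 = f`, `1 = gam`. -/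
noncomputable def phiEx : L.Formula (Fin 2) :=
  (phiB.relabel (![Sum.inl 0, Sum.inl 1, Sum.inr 0] : Fin 3 → Fin 2 ⊕ Fin 1)).iExs (Fin 1)

open FirstOrder Language in
theorem relMap_mStruc (M : ZFSet) (r : ZFSet → ZFSet → Prop) (a b : M.toSet) :
    (mStruc M r).RelMap (show L.Relations 2 from (0 : Fin 2)) ![a, b] ↔ ((a : ZFSet) ∈ (b : ZFSet)) := by
  show (@ite _ ((0 : Fin 2) = (0 : Fin 2)) (instDecidableEqFin 2 0 0) ((a : ZFSet) ∈ (b : ZFSet)) (r a b)) ↔ _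
  rw [if_pos rfl]

open FirstOrder Language in
theorem realize_phiB (M : ZFSet) (r : ZFSet → ZFSet → Prop) (v : Fin 3 → M.toSet) :
    (letI := mStruc M r; phiB.Realize v) ↔
      ((v 2 : ZFSet) ∈ (v 1 : ZFSet) ∧
        ∀ p u w : M.toSet, (p : ZFSet) ∈ (v 0 : ZFSet) → (u : ZFSet) ∈ (p : ZFSet) →
          (w : ZFSet) ∈ (u : ZFSet) → (w : ZFSet) ∈ (v 1 : ZFSet) →
          (w : ZFSet) ∈ (v 2 : ZFSet)) := by
  letI := mStruc M r
  have hR : ∀ a b : M.toSet,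
      Structure.RelMap (M := M.toSet) (show L.Relations 2 from (0 : Fin 2)) ![a, b]
        ↔ ((a : ZFSet) ∈ (b : ZFSet)) :=
    fun a b => relMap_mStruc M r a b
  simp only [phiB, phiMat, memF, Formula.realize_inf, Formula.realize_imp,
    Formula.realize_iAlls, Formula.realize_rel₂, Term.realize_var, Sum.elim_inl,
    Sum.elim_inr, id_eq, hR]
  refine and_congr Iff.rfl ⟨fun h p u w hp hu hw hwg => ?_, fun h i hi => ?_⟩
  · have := h ![p, u, w]
    exact this ⟨⟨⟨hp, hu⟩, hw⟩, hwg⟩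
  · exact h (i 0) (i 1) (i 2) hi.1.1.1 hi.1.1.2 hi.1.2 hi.2

open FirstOrder Language in
theorem realize_phiEx (M : ZFSet) (r : ZFSet → ZFSet → Prop) (v : Fin 2 → M.toSet) :
    (letI := mStruc M r; phiEx.Realize v) ↔
      ∃ o : M.toSet, (letI := mStruc M r; phiB.Realize ![v 0, v 1, o]) := by
  letI := mStruc M r
  simp only [phiEx, Formula.realize_iExs, Formula.realize_relabel, Function.comp_def]
  constructor
  · rintro ⟨i, h⟩
    refine ⟨i 0, ?_⟩
    have he : (fun a => Sum.elim v i ((![Sum.inl 0, Sum.inl 1, Sum.inr 0] : Fin 3 → Fin 2 ⊕ Fin 1) a))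
        = ![v 0, v 1, i 0] := by
      funext a
      fin_cases a <;> rfl
    rwa [he] at h
  · rintro ⟨o, h⟩
    refine ⟨fun _ => o, ?_⟩
    have he : (fun a => Sum.elim v (fun _ => o) ((![Sum.inl 0, Sum.inl 1, Sum.inr 0] : Fin 3 → Fin 2 ⊕ Fin 1) a))
        = ![v 0, v 1, o] := by
      funext a
      fin_cases a <;> rfl
    rwa [he]


theorem stmt_3 (χ : Cardinal.{1}) (hχ : χ.IsRegular) (Hs : ZFSet) (hH : IsHCard χ Hs)
    (r : ZFSet → ZFSet → Prop) (hr : WOn Hs r) (X lam gam η Y : ZFSet)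
    (hX : ElemSub Hs r X) (hXc : X.toSet.Countable)
    (hlam : lam ∈ X) (hgam : gam ∈ X) (hlo : IsOrd lam) (hgo : IsRegOrd gam)
    (hlg : lam ∈ gam) (hηo : IsOrd η) (hηl : η ∈ lam)
    (hY : IsMinExt Hs r η lam X Y) :
    ∀ y, y ∈ Y → y ∈ gam → ∃ x, x ∈ X ∧ x ∈ gam ∧ (y = x ∨ y ∈ x) := by
  classical
  obtain ⟨hXsub, hXelem⟩ := hX
  obtain ⟨-, -, A, hAsub, hYeq⟩ := hY
  intro y hyY hyγ
  have hy' : y ∈ SkHull Hs lam X A := by rw [← hYeq]; exact hyY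
  rcases hy' with hyX | ⟨f, hfX, hfun, a, hafin, haA, hpair⟩
  · exact ⟨y, hyX, hyγ, Or.inl rfl⟩
  · obtain ⟨o, hoγ, hBound⟩ := bound_main hgo hlo hlg hfun
    have hHtr : ∀ x z : ZFSet, x ∈ Hs → z ∈ x → z ∈ Hs := fun x z hx hz =>
      (hH z).2 (herLt_of_mem ((hH x).1 hx) hz)
    have hfHs : f ∈ Hs := hXsub hfX
    have hgamHs : gam ∈ Hs := hXsub hgam
    have hoHs : o ∈ Hs := hHtr gam o hgamHs hoγ
    set vX : Fin 2 → X.toSet := ![⟨f, hfX⟩, ⟨gam, hgam⟩] with hvX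
    have hS1 : (letI := mStruc Hs r;
        phiEx.Realize (fun i => (⟨(vX i : ZFSet), hXsub (vX i).2⟩ : Hs.toSet))) := by
      rw [realize_phiEx]
      refine ⟨⟨o, hoHs⟩, ?_⟩
      rw [realize_phiB]
      exact ⟨hoγ, fun p u w hp hu hw hwγ => hBound p u w hp hu hw hwγ⟩
    have hS2 := (hXelem 2 phiEx vX).1 hS1
    rw [realize_phiEx] at hS2
    obtain ⟨oX, hoX⟩ := hS2
    have hS3 := (hXelem 3 phiB ![vX 0, vX 1, oX]).2 hoX
    rw [realize_phiB] at hS3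
    obtain ⟨hoXγ, hB⟩ := hS3
    have hpHs : ZFSet.pair a y ∈ Hs := hHtr f _ hfHs hpair
    have hmem1 : ({a, y} : ZFSet) ∈ ZFSet.pair a y := ZFSet.mem_pair.2 (Or.inr rfl)
    have hmem2 : y ∈ ({a, y} : ZFSet) := ZFSet.mem_pair.2 (Or.inr rfl)
    have huHs : ({a, y} : ZFSet) ∈ Hs := hHtr _ _ hpHs hmem1
    have hyHs : y ∈ Hs := hHtr _ _ huHs hmem2
    have hfin := hB ⟨ZFSet.pair a y, hpHs⟩ ⟨{a, y}, huHs⟩ ⟨y, hyHs⟩ hpair hmem1 hmem2 hyγ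
    exact ⟨(oX : ZFSet), oX.2, hoXγ, Or.inr hfin⟩


end P746
end

section
/- If the nonstationary ideal on ω₁ is saturated, then every function from ω₁ to ω₁ is bounded on a club subset of ω₁ by a canonical function for an ordinal less than ω₂. -/
open ZFSet FirstOrder

namespace P746

section Aux
open Ordinal Cardinal Set

/-! ### Basic facts about `omega1` and clubs -/

lemma omega1_isLimit : Order.IsSuccLimit omega1 := Cardinal.isSuccLimit_ord (Cardinal.aleph0_le_aleph 1)

lemma omega1_pos : (0 : Ordinal) < omega1 := omega1_isLimit.pos

lemma succ_lt_omega1 {a : Ordinal} (h : a < omega1) : Order.succ a < omega1 :=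
  omega1_isLimit.succ_lt h

lemma cof_omega1 : omega1.cof = Cardinal.aleph 1 := Cardinal.isRegular_aleph_one.cof_eq

lemma club_Iio : IsClub (Set.Iio omega1) :=
  ⟨subset_rfl, fun o ho _ _ => ho,
    fun b hb => ⟨Order.succ b, succ_lt_omega1 hb, Order.lt_succ b, succ_lt_omega1 hb⟩⟩

lemma exists_seq {Q : ℕ → Ordinal → Ordinal → Prop}
    (h : ∀ n x, x < omega1 → ∃ y, x < y ∧ y < omega1 ∧ Q n x y)
    {b : Ordinal} (hb : b < omega1) :
    ∃ a : ℕ → Ordinal, a 0 = b ∧ (∀ n, a n < omega1) ∧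
      ∀ n, a n < a (n + 1) ∧ Q n (a n) (a (n + 1)) := by
  choose F hF1 hF2 hF3 using h
  let g : ℕ → {x : Ordinal // x < omega1} := fun n =>
    Nat.rec ⟨b, hb⟩ (fun n p => ⟨F n p.1 p.2, hF2 n p.1 p.2⟩) n
  have hg : ∀ n, g (n + 1) = ⟨F n (g n).1 (g n).2, hF2 n (g n).1 (g n).2⟩ := fun n => rfl
  refine ⟨fun n => (g n).1, rfl, fun n => (g n).2, fun n => ?_⟩
  show (g n).1 < (g (n + 1)).1 ∧ Q n (g n).1 (g (n + 1)).1
  rw [hg n]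
  exact ⟨hF1 n (g n).1 (g n).2, hF3 n (g n).1 (g n).2⟩

lemma sup_seq {a : ℕ → Ordinal} (h1 : ∀ n, a n < omega1) (h2 : ∀ n, a n < a (n + 1)) :
    iSup a < omega1 ∧ Order.IsSuccLimit (iSup a) ∧ ∀ n, a n < iSup a := by
  have hlt : ∀ n, a n < iSup a := fun n => (h2 n).trans_le (Ordinal.le_iSup a (n + 1))
  have hs : iSup a < omega1 := by
    apply Ordinal.iSup_lt_ord ?_ h1
    rw [cof_omega1, Cardinal.mk_nat]
    exact Cardinal.aleph0_lt_aleph_one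
  refine ⟨hs, Ordinal.isSuccLimit_iff.2 ⟨?_, Order.isSuccPrelimit_of_succ_lt ?_⟩, hlt⟩
  · exact (zero_le.trans_lt (hlt 0)).ne'
  · intro x hx
    obtain ⟨n, hn⟩ := Ordinal.lt_iSup_iff.1 hx
    exact (Order.succ_le_of_lt hn).trans_lt (hlt n)

lemma mono_seq {a : ℕ → Ordinal} (h2 : ∀ n, a n < a (n + 1)) : Monotone a :=
  (strictMono_nat_of_lt_succ h2).monotone

lemma inter_club {C : ℕ → Set Ordinal} (hC : ∀ n, IsClub (C n)) : IsClub (⋂ n, C n) := by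
  refine ⟨(Set.iInter_subset C 0).trans (hC 0).1, ?_, ?_⟩
  · intro o ho hlim happ
    refine Set.mem_iInter.2 fun k => (hC k).2.1 o ho hlim fun b hb => ?_
    obtain ⟨c, hc, hbc, hco⟩ := happ b hb
    exact ⟨c, Set.mem_iInter.1 hc k, hbc, hco⟩
  · intro b hb
    have step : ∀ (n : ℕ) (x : Ordinal), x < omega1 →
        ∃ y, x < y ∧ y < omega1 ∧ y ∈ C n.unpair.1 := by
      intro n x hx
      obtain ⟨c, hc, hxc, hc1⟩ := (hC n.unpair.1).2.2 x hx
      exact ⟨c, hxc, hc1, hc⟩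
    obtain ⟨a, ha0, ha1, ha2⟩ := exists_seq step hb
    obtain ⟨hlo, hlim, hlt⟩ := sup_seq ha1 (fun n => (ha2 n).1)
    have hmono := mono_seq (fun n => (ha2 n).1)
    refine ⟨iSup a, ?_, ?_, hlo⟩
    · refine Set.mem_iInter.2 fun k => (hC k).2.1 _ hlo hlim fun bb hbb => ?_
      obtain ⟨m, hm⟩ := Ordinal.lt_iSup_iff.1 hbb
      have hmem : a (Nat.pair k m + 1) ∈ C k := by
        have := (ha2 (Nat.pair k m)).2
        rwa [Nat.unpair_pair] at this
      refine ⟨a (Nat.pair k m + 1), hmem, ?_, hlt _⟩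
      exact (hm.trans_le (hmono (Nat.right_le_pair k m))).le.trans (ha2 (Nat.pair k m)).1.le
    · rw [← ha0]; exact hlt 0

lemma club_inter {C D : Set Ordinal} (hC : IsClub C) (hD : IsClub D) : IsClub (C ∩ D) := by
  have he : C ∩ D = ⋂ n : ℕ, (if n = 0 then C else D) := by
    ext x
    simp only [Set.mem_inter_iff, Set.mem_iInter]
    constructor
    · rintro ⟨h1, h2⟩ n
      by_cases h : n = 0 <;> simp [h, h1, h2]
    · intro h
      have h0 := h 0; have h1 := h 1
      simp only [if_pos rfl] at h0
      simp only [one_ne_zero, if_false] at h1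
      exact ⟨h0, h1⟩
  rw [he]
  exact inter_club (fun n => by by_cases h : n = 0 <;> simp [h, hC, hD])

lemma club_Ioi {x : Ordinal} (hx : x < omega1) : IsClub (Set.Iio omega1 ∩ Set.Ioi x) := by
  refine ⟨Set.inter_subset_left, ?_, ?_⟩
  · intro o ho hlim happ
    obtain ⟨c, hc, _, hco⟩ := happ 0 hlim.pos
    exact ⟨ho, hc.2.trans hco⟩
  · intro b hb
    refine ⟨Order.succ (max b x), ⟨succ_lt_omega1 (max_lt hb hx), ?_⟩, ?_, succ_lt_omega1 (max_lt hb hx)⟩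
    · exact (le_max_right b x).trans_lt (Order.lt_succ _)
    · exact (le_max_left b x).trans_lt (Order.lt_succ _)

/-! ### Countability and diagonal intersections -/

lemma countable_surj_of_lt_omega1 {o : Ordinal} (ho : o < omega1) (h0 : 0 < o) :
    ∃ u : ℕ → Ordinal, ∀ x < o, ∃ n, u n = x := by
  have hco : (Set.Iio o).Countable := by
    rw [Cardinal.countable_iff_lt_aleph_one, Ordinal.mk_Iio_ordinal]
    have h1 : o.card < Cardinal.aleph 1 := Cardinal.lt_ord.1 ho
    have : Cardinal.lift.{1} o.card < Cardinal.lift.{1} (Cardinal.aleph 1) :=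
      Cardinal.lift_lt.2 h1
    rwa [Cardinal.lift_aleph, Ordinal.lift_one] at this
  obtain ⟨u, hu⟩ := (Set.countable_iff_exists_surjective ⟨0, Set.mem_Iio.2 h0⟩).1 hco
  refine ⟨fun n => (u n).1, fun x hx => ?_⟩
  obtain ⟨n, hn⟩ := hu ⟨x, Set.mem_Iio.2 hx⟩
  exact ⟨n, congrArg Subtype.val hn⟩

def diagInter (D : Ordinal → Set Ordinal) : Set Ordinal :=
  {α | α < omega1 ∧ ∀ ξ < α, α ∈ D ξ}

lemma diag_club {D : Ordinal → Set Ordinal} (hD : ∀ ξ, IsClub (D ξ)) : IsClub (diagInter D) := by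
  refine ⟨fun α hα => hα.1, ?_, ?_⟩
  · intro o ho hlim happ
    refine ⟨ho, fun ξ hξ => ?_⟩
    apply (hD ξ).2.1 o ho hlim
    intro bb hbb
    obtain ⟨c, hc, hbc, hco⟩ := happ _ (max_lt hbb (hlim.succ_lt hξ))
    refine ⟨c, hc.2 ξ ((Order.lt_succ ξ).trans_le ((le_max_right _ _).trans hbc)),
      (le_max_left _ _).trans hbc, hco⟩
  · intro b hb
    have step : ∀ (_ : ℕ) (x : Ordinal), x < omega1 →
        ∃ y, x < y ∧ y < omega1 ∧ ∀ ξ ≤ x, y ∈ D ξ := by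
      intro _ x hx
      obtain ⟨u, hu⟩ := countable_surj_of_lt_omega1 (succ_lt_omega1 hx)
        (zero_le.trans_lt (Order.lt_succ x))
      have hclub : IsClub ((⋂ n, D (u n)) ∩ (Set.Iio omega1 ∩ Set.Ioi x)) :=
        club_inter (inter_club fun n => hD (u n)) (club_Ioi hx)
      obtain ⟨y, hy, hxy, hy1⟩ := hclub.2.2 x hx
      refine ⟨y, hxy, hy1, fun ξ hξ => ?_⟩
      obtain ⟨n, hn⟩ := hu ξ (hξ.trans_lt (Order.lt_succ x))
      exact hn ▸ Set.mem_iInter.1 hy.1 n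
    obtain ⟨a, ha0, ha1, ha2⟩ := exists_seq step hb
    obtain ⟨hlo, hlim, hlt⟩ := sup_seq ha1 (fun n => (ha2 n).1)
    have hmono := mono_seq (fun n => (ha2 n).1)
    refine ⟨iSup a, ⟨hlo, ?_⟩, ?_, hlo⟩
    · intro ξ hξ
      obtain ⟨n, hn⟩ := Ordinal.lt_iSup_iff.1 hξ
      apply (hD ξ).2.1 _ hlo hlim
      intro bb hbb
      obtain ⟨m, hm⟩ := Ordinal.lt_iSup_iff.1 hbb
      refine ⟨a (max n m + 1), (ha2 (max n m)).2 ξ ?_, ?_, hlt _⟩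
      · exact (hn.trans_le (hmono (le_max_left n m))).le
      · exact (hm.trans_le (hmono (le_max_right n m))).le.trans (ha2 (max n m)).1.le
    · rw [← ha0]; exact hlt 0

/-! ### Stationary sets and Fodor's lemma -/

lemma not_stat_iff {X : Set Ordinal} : ¬ IsStat X ↔ ∃ C, IsClub C ∧ X ∩ C = ∅ := by
  constructor
  · intro h
    unfold IsStat at h
    push_neg at h
    obtain ⟨C, h1, h2⟩ := h
    exact ⟨C, h1, h2⟩
  · rintro ⟨C, h1, h2⟩ hstat
    obtain ⟨α, hα⟩ := hstat C h1
    rw [h2] at hα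
    exact hα

lemma fodor {S : Set Ordinal} (hS : IsStat S) {r : Ordinal → Ordinal}
    (hr : ∀ α ∈ S, r α < α) : ∃ ξ, IsStat {α | α ∈ S ∧ r α = ξ} := by
  by_contra hcon
  push_neg at hcon
  have h1 : ∀ ξ, ∃ C, IsClub C ∧ {α | α ∈ S ∧ r α = ξ} ∩ C = ∅ :=
    fun ξ => not_stat_iff.1 (hcon ξ)
  choose C hC1 hC2 using h1
  obtain ⟨α, hαS, hαD⟩ := hS (diagInter C) (diag_club hC1)
  have : α ∈ {β | β ∈ S ∧ r β = r α} ∩ C (r α) :=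
    ⟨⟨hαS, rfl⟩, hαD.2 (r α) (hr α hαS)⟩
  rw [hC2] at this
  exact this

/-! ### Order types of bounded sets of ordinals -/

open Classical in
noncomputable def otp (s : Set Ordinal.{0}) : Ordinal.{0} :=
  if h : ∃ o : Ordinal.{0}, Ordinal.lift.{1} o = Ordinal.type (Subrel ((· < ·) : Ordinal → Ordinal → Prop) (· ∈ s)) then
    h.choose else 0

lemma lift_otp {s : Set Ordinal.{0}} {t : Ordinal.{0}} (hs : s ⊆ Set.Iio t) :
    Ordinal.lift.{1} (otp s) = Ordinal.type (Subrel ((· < ·) : Ordinal → Ordinal → Prop) (· ∈ s)) := by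
  have hle : Ordinal.type (Subrel ((· < ·) : Ordinal → Ordinal → Prop) (· ∈ s)) ≤
      Ordinal.lift.{1} t := by
    have emb : Subrel ((· < ·) : Ordinal → Ordinal → Prop) (· ∈ s) ↪r
        Subrel ((· < ·) : Ordinal → Ordinal → Prop) (fun b : Ordinal => b < t) :=
      ⟨⟨Set.inclusion hs, Set.inclusion_injective hs⟩, Iff.rfl⟩
    have h2 := emb.ordinal_type_le
    rwa [Ordinal.type_subrel, Ordinal.typein_ordinal] at h2
  obtain ⟨o, ho⟩ := Ordinal.mem_range_lift_of_le hle
  have hP : ∃ o : Ordinal.{0}, Ordinal.lift.{1} o =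
      Ordinal.type (Subrel ((· < ·) : Ordinal → Ordinal → Prop) (· ∈ s)) := ⟨o, ho⟩
  rw [otp, dif_pos hP]
  exact hP.choose_spec

lemma otp_le_otp {s u : Set Ordinal.{0}} {t : Ordinal} (hu : u ⊆ Set.Iio t) (hsu : s ⊆ u) :
    otp s ≤ otp u := by
  rw [← Ordinal.lift_le.{1}, lift_otp (hsu.trans hu), lift_otp hu]
  exact RelEmbedding.ordinal_type_le
    ⟨⟨Set.inclusion hsu, Set.inclusion_injective hsu⟩, Iff.rfl⟩

lemma type_inter_eq_typein {u : Set Ordinal.{0}} {x : Ordinal} (hx : x ∈ u) :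
    Ordinal.type (Subrel ((· < ·) : Ordinal → Ordinal → Prop) (· ∈ u ∩ Set.Iio x)) =
      Ordinal.typein (Subrel ((· < ·) : Ordinal → Ordinal → Prop) (· ∈ u)) ⟨x, hx⟩ := by
  rw [← Ordinal.type_subrel]
  refine Ordinal.type_eq.2 ⟨⟨⟨fun p => ⟨⟨p.1, p.2.1⟩, p.2.2⟩,
    fun q => ⟨q.1.1, ⟨q.1.2, q.2⟩⟩, fun _ => rfl, fun _ => rfl⟩, Iff.rfl⟩⟩

lemma otp_inter_lt {u : Set Ordinal.{0}} {t x : Ordinal} (hu : u ⊆ Set.Iio t) (hx : x ∈ u) :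
    otp (u ∩ Set.Iio x) < otp u := by
  rw [← Ordinal.lift_lt.{1}, lift_otp (Set.inter_subset_left.trans hu), lift_otp hu,
    type_inter_eq_typein hx]
  exact Ordinal.typein_lt_type _ _

lemma otp_surj {u : Set Ordinal.{0}} {t h : Ordinal} (hu : u ⊆ Set.Iio t) (hh : h < otp u) :
    ∃ x ∈ u, otp (u ∩ Set.Iio x) = h := by
  have hlt : Ordinal.lift.{1} h <
      Ordinal.type (Subrel ((· < ·) : Ordinal → Ordinal → Prop) (· ∈ u)) := by
    rw [← lift_otp hu]; exact Ordinal.lift_lt.2 hh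
  obtain ⟨a, ha⟩ := Ordinal.typein_surj _ hlt
  refine ⟨a.1, a.2, ?_⟩
  apply Ordinal.lift_inj.1
  rw [lift_otp (Set.inter_subset_left.trans hu), type_inter_eq_typein a.2]
  exact ha

lemma otp_empty : otp (∅ : Set Ordinal.{0}) = 0 := by
  have h := lift_otp (s := (∅ : Set Ordinal.{0})) (t := 1) (by simp)
  rw [Ordinal.type_eq_zero_of_empty] at h
  exact Ordinal.lift_inj.1 (h.trans Ordinal.lift_zero.symm)

lemma otp_pos {s : Set Ordinal.{0}} {t : Ordinal} (hs : s ⊆ Set.Iio t) (hne : s.Nonempty) :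
    0 < otp s := by
  rw [← Ordinal.lift_lt.{1}, Ordinal.lift_zero, lift_otp hs, pos_iff_ne_zero]
  intro h0
  rw [Ordinal.type_eq_zero_iff_isEmpty] at h0
  exact h0.elim' ⟨hne.choose, hne.choose_spec⟩

/-! ### Surjections and the functions `Efn`, `gfn` -/

lemma aleph2_eq_succ : Cardinal.aleph 2 = Order.succ (Cardinal.aleph 1) := by
  have h2 : (2 : Ordinal) = Order.succ 1 := by
    rw [← Ordinal.add_one_eq_succ, one_add_one_eq_two]
  rw [h2, Cardinal.aleph_succ]

lemma exists_E {γ : Ordinal} (h0 : 0 < γ) (h2 : γ < omega2) :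
    ∃ E : Ordinal → Ordinal, (∀ ξ < omega1, E ξ < γ) ∧ ∀ x < γ, ∃ ξ < omega1, E ξ = x := by
  have hcard : Cardinal.mk (Set.Iio γ) ≤ Cardinal.mk (Set.Iio omega1) := by
    rw [Ordinal.mk_Iio_ordinal, Ordinal.mk_Iio_ordinal]
    apply Cardinal.lift_le.2
    have hγ2 : γ.card < Cardinal.aleph 2 := Cardinal.lt_ord.1 h2
    rw [aleph2_eq_succ, Order.lt_succ_iff] at hγ2
    have hc : omega1.card = Cardinal.aleph 1 := Cardinal.card_ord _
    rw [hc]; exact hγ2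
  obtain ⟨f⟩ := (Cardinal.le_def _ _).1 hcard
  haveI : Nonempty (Set.Iio γ) := ⟨⟨0, Set.mem_Iio.2 h0⟩⟩
  have hsurj := Function.invFun_surjective f.injective
  refine ⟨fun ξ => if h : ξ < omega1 then ((Function.invFun (⇑f) ⟨ξ, Set.mem_Iio.2 h⟩ : Set.Iio γ) : Ordinal)
    else 0, ?_, ?_⟩
  · intro ξ hξ
    simp only [dif_pos hξ]
    exact (Function.invFun (⇑f) (⟨ξ, Set.mem_Iio.2 hξ⟩ : Set.Iio omega1)).2
  · intro x hx
    obtain ⟨p, hp⟩ := hsurj ⟨x, Set.mem_Iio.2 hx⟩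
    refine ⟨p.1, p.2, ?_⟩
    simp only [dif_pos (Set.mem_Iio.1 p.2)]
    exact congrArg Subtype.val hp

noncomputable def Efn (γ : Ordinal) : Ordinal → Ordinal :=
  if h : 0 < γ ∧ γ < omega2 then (exists_E h.1 h.2).choose else fun _ => 0

lemma Efn_lt {γ : Ordinal} (h0 : 0 < γ) (h2 : γ < omega2) : ∀ ξ < omega1, Efn γ ξ < γ := by
  rw [Efn, dif_pos ⟨h0, h2⟩]
  exact (exists_E h0 h2).choose_spec.1

lemma Efn_surj {γ : Ordinal} (h0 : 0 < γ) (h2 : γ < omega2) :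
    ∀ x < γ, ∃ ξ < omega1, Efn γ ξ = x := by
  rw [Efn, dif_pos ⟨h0, h2⟩]
  exact (exists_E h0 h2).choose_spec.2

noncomputable def gfn (γ : Ordinal) : Ordinal → Ordinal :=
  if γ = 0 then fun _ => 0 else fun α => otp (Efn γ '' Set.Iio α)

lemma img_sub {γ α : Ordinal} (h0 : 0 < γ) (h2 : γ < omega2) (hα : α ≤ omega1) :
    Efn γ '' Set.Iio α ⊆ Set.Iio γ := by
  rintro y ⟨ξ, hξ, rfl⟩
  exact Set.mem_Iio.2 (Efn_lt h0 h2 ξ ((Set.mem_Iio.1 hξ).trans_le hα))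

/-! ### Coherence clubs and comparison of the `gfn` -/

lemma coh_club {β γ : Ordinal} (hβ0 : 0 < β) (hβγ : β < γ) (hγ : γ < omega2) :
    ∃ C, IsClub C ∧ ∀ α ∈ C,
      (Efn γ '' Set.Iio α) ∩ Set.Iio β = Efn β '' Set.Iio α ∧ β ∈ Efn γ '' Set.Iio α := by
  have hγ0 : (0 : Ordinal) < γ := hβ0.trans hβγ
  have hβ2 : β < omega2 := hβγ.trans hγ
  have h1 : ∀ ξ : Ordinal, ∃ D, IsClub D ∧
      (ξ < omega1 → Efn γ ξ < β → ∀ α ∈ D, ∃ ξ' < α, Efn β ξ' = Efn γ ξ) := by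
    intro ξ
    by_cases h : ξ < omega1 ∧ Efn γ ξ < β
    · obtain ⟨ξ', hξ'1, hξ'2⟩ := Efn_surj hβ0 hβ2 _ h.2
      exact ⟨Set.Iio omega1 ∩ Set.Ioi ξ', club_Ioi hξ'1,
        fun _ _ α hα => ⟨ξ', hα.2, hξ'2⟩⟩
    · exact ⟨Set.Iio omega1, club_Iio, fun hh1 hh2 => absurd ⟨hh1, hh2⟩ h⟩
  have h2 : ∀ ξ : Ordinal, ∃ D, IsClub D ∧
      (ξ < omega1 → ∀ α ∈ D, ∃ ξ' < α, Efn γ ξ' = Efn β ξ) := by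
    intro ξ
    by_cases h : ξ < omega1
    · obtain ⟨ξ', hξ'1, hξ'2⟩ := Efn_surj hγ0 hγ _ ((Efn_lt hβ0 hβ2 ξ h).trans hβγ)
      exact ⟨Set.Iio omega1 ∩ Set.Ioi ξ', club_Ioi hξ'1, fun _ α hα => ⟨ξ', hα.2, hξ'2⟩⟩
    · exact ⟨Set.Iio omega1, club_Iio, fun hh => absurd hh h⟩
  choose D1 hD1c hD1 using h1
  choose D2 hD2c hD2 using h2
  obtain ⟨ξβ, hξβ1, hξβ2⟩ := Efn_surj hγ0 hγ β hβγ
  refine ⟨diagInter D1 ∩ diagInter D2 ∩ (Set.Iio omega1 ∩ Set.Ioi ξβ),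
    club_inter (club_inter (diag_club hD1c) (diag_club hD2c)) (club_Ioi hξβ1), ?_⟩
  rintro α ⟨⟨hα1, hα2⟩, hα3, hα4⟩
  have hαω : α < omega1 := hα3
  constructor
  · apply Set.Subset.antisymm
    · rintro y ⟨⟨ξ, hξα, rfl⟩, hyβ⟩
      have hξω : ξ < omega1 := (Set.mem_Iio.1 hξα).trans hαω
      obtain ⟨ξ', hξ'α, hξ'e⟩ := hD1 ξ hξω hyβ α (hα1.2 ξ hξα)
      exact ⟨ξ', Set.mem_Iio.2 hξ'α, hξ'e⟩
    · rintro y ⟨ξ, hξα, rfl⟩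
      have hξω : ξ < omega1 := (Set.mem_Iio.1 hξα).trans hαω
      obtain ⟨ξ', hξ'α, hξ'e⟩ := hD2 ξ hξω α (hα2.2 ξ hξα)
      exact ⟨⟨ξ', Set.mem_Iio.2 hξ'α, hξ'e⟩, Set.mem_Iio.2 (Efn_lt hβ0 hβ2 ξ hξω)⟩
  · exact ⟨ξβ, Set.mem_Iio.2 hα4, hξβ2⟩

lemma gfn_lt_gfn {β γ : Ordinal} (hβγ : β < γ) (hγ : γ < omega2) :
    LtOnClub (gfn β) (gfn γ) := by
  have hγ0 : (0 : Ordinal) < γ := zero_le.trans_lt hβγ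
  by_cases hβ0 : β = 0
  · subst hβ0
    refine ⟨Set.Iio omega1 ∩ Set.Ioi 0, club_Ioi omega1_pos, fun α hα => ?_⟩
    rw [gfn, if_pos rfl, gfn, if_neg hγ0.ne']
    exact otp_pos (img_sub hγ0 hγ (le_of_lt hα.1)) ⟨Efn γ 0, ⟨0, Set.mem_Iio.2 hα.2, rfl⟩⟩
  · obtain ⟨C, hC, hCoh⟩ := coh_club (pos_iff_ne_zero.2 hβ0) hβγ hγ
    refine ⟨C, hC, fun α hα => ?_⟩
    obtain ⟨heq, hmem⟩ := hCoh α hα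
    rw [gfn, if_neg hβ0, gfn, if_neg hγ0.ne']
    have hαω : α < omega1 := hC.1 hα
    calc otp (Efn β '' Set.Iio α) = otp ((Efn γ '' Set.Iio α) ∩ Set.Iio β) := by rw [heq]
    _ < otp (Efn γ '' Set.Iio α) := otp_inter_lt (img_sub hγ0 hγ hαω.le) hmem

/-! ### The recursive characterization of `Canonical` -/

lemma Canonical_iff (γ : Ordinal) (f : Ordinal → Ordinal) :
    Canonical γ f ↔
      (∀ β, β < γ → ∀ g, Canonical β g → LtOnClub g f) ∧
      (∀ h : Ordinal.{0} → Ordinal.{0},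
        (∀ β, β < γ → ∀ g, Canonical β g → LtOnClub g h) → BddOnClub f h) := by
  unfold Canonical
  rw [WellFounded.fix_eq]

lemma canonical_gfn : ∀ γ, γ < omega2 → Canonical γ (gfn γ) := by
  intro γ
  induction γ using Ordinal.induction with
  | h γ IH =>
    intro hγ2
    rw [Canonical_iff]
    constructor
    · intro β hβ g hg
      have hβ2 : β < omega2 := hβ.trans hγ2
      have hcβ := IH β hβ hβ2
      have h1 : BddOnClub g (gfn β) :=
        ((Canonical_iff β g).1 hg).2 (gfn β) ((Canonical_iff β (gfn β)).1 hcβ).1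
      obtain ⟨C1, hC1, hle⟩ := h1
      obtain ⟨C2, hC2, hlt⟩ := gfn_lt_gfn hβ hγ2
      exact ⟨C1 ∩ C2, club_inter hC1 hC2,
        fun α hα => (hle α hα.1).trans_lt (hlt α hα.2)⟩
    · intro h hh
      by_cases hγ0 : γ = 0
      · subst hγ0
        refine ⟨Set.Iio omega1, club_Iio, fun α _ => ?_⟩
        rw [gfn, if_pos rfl]
        exact zero_le
      · have hγ0' : (0 : Ordinal) < γ := pos_iff_ne_zero.2 hγ0
        by_contra hcon
        -- the set where `h < gfn γ` is stationary
        have hN : IsStat {α | α < omega1 ∧ h α < gfn γ α} := by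
          intro C hC
          by_contra hne
          rw [Set.not_nonempty_iff_eq_empty] at hne
          apply hcon
          refine ⟨C, hC, fun α hα => ?_⟩
          by_contra hlt'
          have : α ∈ {α | α < omega1 ∧ h α < gfn γ α} ∩ C :=
            ⟨⟨hC.1 hα, not_le.1 hlt'⟩, hα⟩
          rw [hne] at this
          exact this
        -- pick witnesses: the `h α`-th element of the image
        have hwit : ∀ α : Ordinal, ∃ ξ : Ordinal, (α < omega1 ∧ h α < gfn γ α) →
            ξ < α ∧ otp ((Efn γ '' Set.Iio α) ∩ Set.Iio (Efn γ ξ)) = h α := by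
          intro α
          by_cases hα : α < omega1 ∧ h α < gfn γ α
          · have hsub : Efn γ '' Set.Iio α ⊆ Set.Iio γ := img_sub hγ0' hγ2 hα.1.le
            have hlt : h α < otp (Efn γ '' Set.Iio α) := by
              have h2 := hα.2
              rwa [gfn, if_neg hγ0] at h2
            obtain ⟨x, hxmem, hxeq⟩ := otp_surj hsub hlt
            obtain ⟨ξ, hξα, hξe⟩ := hxmem
            exact ⟨ξ, fun _ => ⟨Set.mem_Iio.1 hξα, by rw [hξe]; exact hxeq⟩⟩
          · exact ⟨0, fun hc => absurd hc hα⟩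
        choose r hr using hwit
        obtain ⟨ξ₀, hN'⟩ := fodor hN (fun α hα => (hr α hα).1)
        obtain ⟨α₀, hα₀⟩ := hN' (Set.Iio omega1) club_Iio
        have hξ₀ω : ξ₀ < omega1 := by
          have h1 := (hr α₀ hα₀.1.1).1
          rw [hα₀.1.2] at h1
          exact h1.trans hα₀.2
        set β₀ := Efn γ ξ₀ with hβ₀def
        have hβ₀γ : β₀ < γ := Efn_lt hγ0' hγ2 ξ₀ hξ₀ω
        have hkey : ∀ α ∈ {α | α ∈ {α | α < omega1 ∧ h α < gfn γ α} ∧ r α = ξ₀},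
            otp ((Efn γ '' Set.Iio α) ∩ Set.Iio β₀) = h α := by
          rintro α ⟨hα1, hα2⟩
          have := (hr α hα1).2
          rwa [hα2] at this
        by_cases hβ₀0 : β₀ = 0
        · -- h vanishes on a stationary set, contradicting `gfn 0 < h` on a club
          have hlt0 := hh 0 hγ0' (gfn 0) (IH 0 hγ0' (hγ0'.trans hγ2))
          obtain ⟨C0, hC0, hlt0'⟩ := hlt0
          obtain ⟨α, hα1, hα2⟩ := hN' C0 hC0
          have hz : h α = 0 := by
            have hk := hkey α hα1
            rw [hβ₀0] at hk
            have hie : (Efn γ '' Set.Iio α) ∩ Set.Iio (0 : Ordinal) = ∅ := by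
              ext x
              simp
            rw [hie, otp_empty] at hk
            exact hk.symm
          have hp := hlt0' α hα2
          rw [gfn, if_pos rfl, hz] at hp
          exact absurd hp (lt_irrefl _)
        · have hβ₀pos : (0 : Ordinal) < β₀ := pos_iff_ne_zero.2 hβ₀0
          obtain ⟨D, hD, hDcoh⟩ := coh_club hβ₀pos hβ₀γ hγ2
          have hltβ := hh β₀ hβ₀γ (gfn β₀) (IH β₀ hβ₀γ (hβ₀γ.trans hγ2))
          obtain ⟨C1, hC1, hlt1⟩ := hltβ
          obtain ⟨α, hα1, hα2⟩ := hN' (D ∩ C1) (club_inter hD hC1)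
          have he1 : h α = otp (Efn β₀ '' Set.Iio α) := by
            rw [← (hDcoh α hα2.1).1]
            exact (hkey α hα1).symm
          have he2 : gfn β₀ α < h α := hlt1 α hα2.2
          rw [gfn, if_neg hβ₀0] at he2
          rw [he1] at he2
          exact absurd he2 (lt_irrefl _)

end Aux
theorem stmt_8
    (hsat : ¬ ∃ S : Ordinal.{0} → Set Ordinal.{0},
      (∀ i, i < omega2 → IsStat (S i)) ∧
      ∀ i j, i < j → j < omega2 → ¬ IsStat (S i ∩ S j)) :
    Bounding := by
  intro f hf
  by_contra hcon
  have hcon' : ∀ γ, γ < omega2 → ∀ g, Canonical γ g → ¬ BddOnClub f g := by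
    intro γ h1 g h2 h3
    exact hcon ⟨γ, h1, g, h2, h3⟩
  -- per-point surjections onto `f α`
  have heN : ∀ α : Ordinal, ∃ e : ℕ → Ordinal,
      α < omega1 → 0 < f α → ∀ x < f α, ∃ n, e n = x := by
    intro α
    by_cases hα : α < omega1 ∧ 0 < f α
    · obtain ⟨u, hu⟩ := countable_surj_of_lt_omega1 (hf α hα.1) hα.2
      exact ⟨u, fun _ _ => hu⟩
    · exact ⟨fun _ => 0, fun h1 h2 => absurd ⟨h1, h2⟩ hα⟩
  choose eN heN using heN
  set T : Ordinal → ℕ → Set Ordinal :=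
    fun δ k => {α | (α < omega1 ∧ gfn δ α < f α) ∧ eN α k = gfn δ α} with hT
  have hW : ∀ δ, δ < omega2 → IsStat {α | α < omega1 ∧ gfn δ α < f α} := by
    intro δ hδ C hC
    have hnb := hcon' δ hδ (gfn δ) (canonical_gfn δ hδ)
    by_contra hne
    rw [Set.not_nonempty_iff_eq_empty] at hne
    apply hnb
    refine ⟨C, hC, fun α hα => ?_⟩
    by_contra hlt'
    have : α ∈ {α | α < omega1 ∧ gfn δ α < f α} ∩ C := ⟨⟨hC.1 hα, not_le.1 hlt'⟩, hα⟩
    rw [hne] at this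
    exact this
  have hTstat : ∀ δ, δ < omega2 → ∃ k, IsStat (T δ k) := by
    intro δ hδ
    by_contra hk
    push_neg at hk
    have h1 : ∀ k : ℕ, ∃ C, IsClub C ∧ T δ k ∩ C = ∅ := fun k => not_stat_iff.1 (hk k)
    choose C hC1 hC2 using h1
    obtain ⟨α, hα1, hα2⟩ := hW δ hδ _ (inter_club hC1)
    obtain ⟨k, hkk⟩ := heN α hα1.1 (zero_le.trans_lt hα1.2) _ hα1.2
    have : α ∈ T δ k ∩ C k := ⟨⟨hα1, hkk⟩, Set.mem_iInter.1 hα2 k⟩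
    rw [hC2 k] at this
    exact this
  set X : ℕ → Set Ordinal := fun k => {δ | δ < omega2 ∧ IsStat (T δ k)} with hX
  have hcov : Set.Iio omega2 ⊆ ⋃ k : ULift.{1} ℕ, X k.down := by
    intro δ hδ
    obtain ⟨k, hk⟩ := hTstat δ hδ
    exact Set.mem_iUnion.2 ⟨⟨k⟩, hδ, hk⟩
  have hcard2 : Cardinal.mk (Set.Iio omega2) = Cardinal.lift.{1,0} (Cardinal.aleph 2) := by
    rw [Ordinal.mk_Iio_ordinal]
    congr 1
    exact Cardinal.card_ord _
  have hbig : ∃ k : ℕ, Cardinal.mk (Set.Iio omega2) ≤ Cardinal.mk (X k) := by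
    by_contra hsm
    push_neg at hsm
    have hle1 : ∀ k : ℕ, Cardinal.mk (X k) ≤ Cardinal.lift.{1,0} (Cardinal.aleph 1) := by
      intro k
      have h1 := hsm k
      rw [hcard2, aleph2_eq_succ, Cardinal.lift_succ, Order.lt_succ_iff] at h1
      exact h1
    have hfin : Cardinal.mk (Set.Iio omega2) ≤ Cardinal.lift.{1,0} (Cardinal.aleph 1) := by
      calc Cardinal.mk (Set.Iio omega2)
          ≤ Cardinal.mk (⋃ k : ULift.{1} ℕ, X k.down) := Cardinal.mk_le_mk_of_subset hcov
        _ ≤ Cardinal.mk (ULift.{1} ℕ) * ⨆ k : ULift.{1} ℕ, Cardinal.mk (X k.down) :=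
            Cardinal.mk_iUnion_le _
        _ ≤ Cardinal.lift.{1,0} (Cardinal.aleph 1) * Cardinal.lift.{1,0} (Cardinal.aleph 1) := by
            apply mul_le_mul'
            · rw [Cardinal.mk_uLift, Cardinal.mk_nat, Cardinal.lift_aleph0]
              exact Cardinal.aleph0_le_lift.2 (Cardinal.aleph0_le_aleph 1)
            · exact ciSup_le fun k => hle1 k.down
        _ = Cardinal.lift.{1,0} (Cardinal.aleph 1) :=
            Cardinal.mul_eq_self (Cardinal.aleph0_le_lift.2 (Cardinal.aleph0_le_aleph 1))
    rw [hcard2] at hfin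
    have h2 := Cardinal.lift_le.1 hfin
    rw [aleph2_eq_succ, Order.succ_le_iff] at h2
    exact absurd h2 (lt_irrefl _)
  obtain ⟨k, hk⟩ := hbig
  obtain ⟨ι⟩ := (Cardinal.le_def _ _).1 hk
  refine hsat ⟨fun i => if h : i < omega2 then T ((ι ⟨i, Set.mem_Iio.2 h⟩ : X k) : Ordinal) k
    else ∅, ?_, ?_⟩
  · intro i hi
    simp only [dif_pos hi]
    exact (ι ⟨i, Set.mem_Iio.2 hi⟩).2.2
  · intro i j hij hj
    have hi : i < omega2 := hij.trans hj
    simp only [dif_pos hi, dif_pos hj]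
    set p := ι ⟨i, Set.mem_Iio.2 hi⟩ with hp
    set q := ι ⟨j, Set.mem_Iio.2 hj⟩ with hq
    have hne : (p : Ordinal) ≠ (q : Ordinal) := by
      intro he
      have : (⟨i, Set.mem_Iio.2 hi⟩ : Set.Iio omega2) = ⟨j, Set.mem_Iio.2 hj⟩ :=
        ι.injective (Subtype.ext he)
      exact hij.ne (congrArg Subtype.val this)
    have hmain : ∀ δ δ' : Ordinal, δ < δ' → δ' < omega2 →
        ¬ IsStat (T δ k ∩ T δ' k) := by
      intro δ δ' hδδ hδ' hstat
      obtain ⟨C, hC, hCl⟩ := gfn_lt_gfn hδδ hδ'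
      obtain ⟨α, hα1, hα2⟩ := hstat C hC
      have he1 : eN α k = gfn δ α := hα1.1.2
      have he2 : eN α k = gfn δ' α := hα1.2.2
      have := hCl α hα2
      rw [← he1, ← he2] at this
      exact absurd this (lt_irrefl _)
    rcases lt_or_gt_of_ne hne with hlt | hlt
    · exact hmain _ _ hlt q.2.1
    · intro hstat
      rw [Set.inter_comm] at hstat
      exact hmain _ _ hlt p.2.1 hstat

end P746
end
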